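/- Let Γ ∈ ℝ^{5×3} have rows (−1,0,2), (−1,−1,0), (0,−1,−1), (1,0,0), (0,1,0); let T ∈ ℝ^{5×3} have rows (−1,0,2), (−1,1,0), (0,1,−1), (1,0,0), (0,−1,0); and let T' ∈ ℝ^{3×5} have rows (1,−2,2,0,0), (1,−1,2,0,0), (1,−1,1,0,0). Then T'T = I₃, and for every V ∈ ℝ^{3×5} satisfying the N1C sign pattern relative to Γ, the matrix J = T'ΓVT ∈ ℝ^{3×3} satisfies J_{ii} ≤ 0 for all i and J_{ij} ≥ 0 for all i ≠ j (i.e., the recoordinatised system for SYS 1 is cooperative). -/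

import Mathlib

/-- `V` satisfies the N1C sign pattern relative to `Γ`. -/
def N1CPattern {n m : ℕ} (Γ : Matrix (Fin n) (Fin m) ℝ)
    (V : Matrix (Fin m) (Fin n) ℝ) : Prop :=
  ∀ (i : Fin n) (j : Fin m), Γ i j * V j i ≤ 0 ∧ (Γ i j = 0 → V j i = 0)

/-- With `Γ` the stoichiometric matrix of SYS 1, `T` the re-signed
version of `Γ`, and `T'` the given left inverse: `T' * T = 1`, and for every `V`
with the N1C sign pattern relative to `Γ`, the matrix `J = T' Γ V T` has
nonpositive diagonal and nonnegative off-diagonal entries. -/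
theorem stmt10 :
    let Γ : Matrix (Fin 5) (Fin 3) ℝ :=
      !![-1, 0, 2; -1, -1, 0; 0, -1, -1; 1, 0, 0; 0, 1, 0]
    let T : Matrix (Fin 5) (Fin 3) ℝ :=
      !![-1, 0, 2; -1, 1, 0; 0, 1, -1; 1, 0, 0; 0, -1, 0]
    let T' : Matrix (Fin 3) (Fin 5) ℝ :=
      !![1, -2, 2, 0, 0; 1, -1, 2, 0, 0; 1, -1, 1, 0, 0]
    T' * T = 1 ∧
    ∀ V : Matrix (Fin 3) (Fin 5) ℝ, N1CPattern Γ V →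
      (∀ i : Fin 3, (T' * Γ * V * T) i i ≤ 0) ∧
      (∀ i j : Fin 3, i ≠ j → 0 ≤ (T' * Γ * V * T) i j) := by
  intro Γ T T'
  constructor
  · ext i j
    fin_cases i <;> fin_cases j <;>
      simp [Γ, T, T', Matrix.mul_apply, Fin.sum_univ_succ, Matrix.one_apply] <;> norm_num
  · intro V hV
    have h00 : 0 ≤ V 0 0 := by have := (hV 0 0).1; simp [Γ] at this; linarith
    have h20 : V 2 0 ≤ 0 := by have := (hV 0 2).1; simp [Γ] at this; linarith
    have h01 : 0 ≤ V 0 1 := by have := (hV 1 0).1; simp [Γ] at this; linarith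
    have h11 : 0 ≤ V 1 1 := by have := (hV 1 1).1; simp [Γ] at this; linarith
    have h12 : 0 ≤ V 1 2 := by have := (hV 2 1).1; simp [Γ] at this; linarith
    have h22 : 0 ≤ V 2 2 := by have := (hV 2 2).1; simp [Γ] at this; linarith
    have h03 : V 0 3 ≤ 0 := by have := (hV 3 0).1; simp [Γ] at this; linarith
    have h14 : V 1 4 ≤ 0 := by have := (hV 4 1).1; simp [Γ] at this; linarith
    have z10 : V 1 0 = 0 := (hV 0 1).2 (by norm_num [Γ])
    have z21 : V 2 1 = 0 := (hV 1 2).2 rfl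
    have z02 : V 0 2 = 0 := (hV 2 0).2 rfl
    have z13 : V 1 3 = 0 := (hV 3 1).2 rfl
    have z23 : V 2 3 = 0 := (hV 3 2).2 rfl
    have z04 : V 0 4 = 0 := (hV 4 0).2 rfl
    have z24 : V 2 4 = 0 := (hV 4 2).2 rfl
    have hJ : T' * Γ * V * T =
        !![-(V 0 0) - V 0 1 + V 0 3, V 0 1, 2 * V 0 0;
           V 1 1, -(V 1 1) - V 1 2 + V 1 4, V 1 2;
           -(V 2 0), V 2 2, 2 * V 2 0 - V 2 2] := by
      ext i j
      fin_cases i <;> fin_cases j <;>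
        simp [Γ, T, T', Matrix.mul_apply, Matrix.vecMul, dotProduct, Matrix.vecHead, Matrix.vecTail, Fin.sum_univ_five, Fin.sum_univ_three,
          z10, z21, z02, z13, z23, z04, z24] <;> ring
    rw [hJ]
    refine ⟨fun i => ?_, fun i j hij => ?_⟩
    · fin_cases i <;> simp <;> linarith
    · fin_cases i <;> fin_cases j <;> simp_all
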